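/- Let X be a Banach space, I = [0,b], 0 = t₀ < t₁ < ⋯ < t_{m+1} = b, and (T(t))_{t∈I} a family of bounded operators with sup_{t∈I}‖T(t)‖ ≤ M, such that T(t) is a compact operator for each t > 0 and T(t+s) = T(t)T(s) for t, s, t+s ∈ I. Assume f : I × X × X → X satisfies ‖f(t,x,y)‖ ≤ μ₁(t) + μ₂(t)‖x‖ + μ₃(t)‖y‖ with μ_i ∈ L^∞(I,ℝ≥0), (Hx)(t) = ∫₀ᵗ h(t,s,x(s)) ds with ‖h(t,s,z)‖ ≤ m(t,s)‖z‖ and K_i* = sup_{t∈I} ∫_{t_{i−1}}^{t_i} m(t,s) ds < ∞, and w ∈ L^∞(I,X). For x ∈ Ω_r define (Q₂x)(t) = ∫_{t_i}^{t} T(t−s)(f(s,x(s),(Hx)(s)) + w(s)) ds for t ∈ (t_i, t_{i+1}] (with t_0 = 0 on [0,t₁]). Then for every fixed t ∈ (t_i, t_{i+1}], the set V(t) = {(Q₂x)(t) : x ∈ Ω_r} is relatively compact in X. -/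

import Mathlib

open MeasureTheory

/-- Key abstract lemma: total boundedness of the set of values of integrals
`∫ s in a..t, G s` where `G s = T (t - s) v` with `‖v‖ ≤ C`. -/
lemma key_totallyBounded
    {X : Type*} [NormedAddCommGroup X] [NormedSpace ℝ X] [CompleteSpace X]
    (b : ℝ) (a t : ℝ) (ha : 0 ≤ a) (hat : a < t) (htb : t ≤ b)
    (M C : ℝ) (hC : 0 ≤ C)
    (T : ℝ → X →L[ℝ] X)
    (hT : ∀ u ∈ Set.Icc (0:ℝ) b, ‖T u‖ ≤ M)
    (hT_cpt : ∀ u : ℝ, 0 < u → u ≤ b → IsCompactOperator (T u))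
    (hT_semigroup : ∀ u s : ℝ, 0 ≤ u → 0 ≤ s → u + s ≤ b →
      T (u + s) = (T u).comp (T s)) :
    TotallyBounded {y : X | ∃ G : ℝ → X,
      (∀ s ∈ Set.Ioc a t, ∃ v : X, ‖v‖ ≤ C ∧ G s = T (t - s) v) ∧
      y = ∫ s in a..t, G s} := by
  have hM : 0 ≤ M := le_trans (norm_nonneg _) (hT 0 ⟨le_refl _, le_trans (le_trans ha hat.le) htb⟩)
  rw [Metric.totallyBounded_iff]
  intro ε hε
  set δ : ℝ := min ((t - a) / 2) (ε / (2 * (M * C + 1))) with hδdef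
  have hMC : (0:ℝ) ≤ M * C := mul_nonneg hM hC
  have hδpos : 0 < δ := lt_min (by linarith) (by positivity)
  have hδlt : δ < t - a := lt_of_le_of_lt (min_le_left _ _) (by linarith)
  have hδb : δ ≤ b := by linarith
  have hδε : M * C * δ ≤ ε / 2 := by
    have h1 : δ ≤ ε / (2 * (M * C + 1)) := min_le_right _ _
    have h2 : δ * (2 * (M * C + 1)) ≤ ε := by
      rw [← le_div_iff₀ (by positivity)]; exact h1
    nlinarith [mul_nonneg hMC hδpos.le]
  -- compact convex set S
  have hcpt : IsCompactOperator (T δ) := hT_cpt δ hδpos hδb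
  have hS : IsCompact (closure ((T δ) '' Metric.closedBall 0 (M * C))) :=
    hcpt.isCompact_closure_image_of_bounded Metric.isBounded_closedBall
  set S : Set X := closure ((T δ) '' Metric.closedBall 0 (M * C)) with hSdef
  have hSconv : Convex ℝ S :=
    ((convex_closedBall (0:X) (M*C)).linear_image (T δ).toLinearMap).closure
  set c : ℝ := t - δ - a with hcdef
  have hcpos : 0 < c := by simp only [hcdef]; linarith
  set S' : Set X := (fun y : X => c • y) '' S with hS'def
  have hS'cpt : IsCompact S' := hS.image (continuous_const_smul c)
  obtain ⟨F, hFfin, hFsub⟩ := Metric.totallyBounded_iff.mp hS'cpt.totallyBounded (ε/2) (by linarith)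
  refine ⟨insert 0 F, hFfin.insert 0, ?_⟩
  rintro y ⟨G, hG, rfl⟩
  by_cases hInt : IntervalIntegrable G MeasureTheory.volume a t
  · -- split the integral
    have hle1 : a ≤ t - δ := by linarith
    have hle2 : t - δ ≤ t := by linarith
    have hInt1 : IntervalIntegrable G MeasureTheory.volume a (t - δ) := by
      apply hInt.mono_set
      rw [Set.uIcc_of_le hle1, Set.uIcc_of_le (le_trans hle1 hle2)]
      exact Set.Icc_subset_Icc le_rfl hle2
    have hInt2 : IntervalIntegrable G MeasureTheory.volume (t - δ) t := by
      apply hInt.mono_set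
      rw [Set.uIcc_of_le hle2, Set.uIcc_of_le (le_trans hle1 hle2)]
      exact Set.Icc_subset_Icc hle1 le_rfl
    have hsplit : (∫ s in a..t, G s) = (∫ s in a..(t-δ), G s) + ∫ s in (t-δ)..t, G s :=
      (intervalIntegral.integral_add_adjacent_intervals hInt1 hInt2).symm
    -- second piece is small
    have hq : ‖∫ s in (t-δ)..t, G s‖ ≤ ε / 2 := by
      have : ‖∫ s in (t-δ)..t, G s‖ ≤ M * C * |t - (t - δ)| := by
        apply intervalIntegral.norm_integral_le_of_norm_le_const
        intro s hs
        rw [Set.uIoc_of_le hle2] at hs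
        obtain ⟨v, hv, hGs⟩ := hG s ⟨lt_of_le_of_lt hle1 hs.1, hs.2⟩
        rw [hGs]
        calc ‖(T (t - s)) v‖ ≤ ‖T (t - s)‖ * ‖v‖ := (T (t-s)).le_opNorm v
          _ ≤ M * C := mul_le_mul (hT _ ⟨by linarith [hs.2], by linarith [hs.1]⟩) hv
              (norm_nonneg _) hM
      have habs : |t - (t - δ)| = δ := by rw [abs_of_nonneg (by linarith)]; ring
      rw [habs] at this
      exact le_trans this hδε
    -- first piece lies in S'
    have hp : (∫ s in a..(t-δ), G s) ∈ S' := by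
      have hIoc : IntegrableOn G (Set.Ioc a (t-δ)) MeasureTheory.volume :=
        (intervalIntegrable_iff_integrableOn_Ioc_of_le hle1).mp hInt1
      have hmem : ∀ᵐ s ∂(MeasureTheory.volume.restrict (Set.Ioc a (t-δ))), G s ∈ S := by
        refine (ae_restrict_iff' measurableSet_Ioc).mpr (Filter.Eventually.of_forall ?_)
        intro s hs
        obtain ⟨v, hv, hGs⟩ := hG s ⟨hs.1, le_trans hs.2 hle2⟩
        have h1 : (0:ℝ) ≤ δ := hδpos.le
        have h2 : (0:ℝ) ≤ t - δ - s := by linarith [hs.2]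
        have h3 : δ + (t - δ - s) ≤ b := by linarith [hs.1]
        have hsg := hT_semigroup δ (t - δ - s) h1 h2 h3
        have heq : t - s = δ + (t - δ - s) := by ring
        have : G s = (T δ) ((T (t - δ - s)) v) := by
          rw [hGs, heq, hsg]; rfl
        rw [this]
        apply subset_closure
        refine ⟨(T (t - δ - s)) v, ?_, rfl⟩
        rw [Metric.mem_closedBall, dist_zero_right]
        calc ‖(T (t - δ - s)) v‖ ≤ ‖T (t - δ - s)‖ * ‖v‖ := (T _).le_opNorm v
          _ ≤ M * C := mul_le_mul (hT _ ⟨h2, by linarith [hs.1]⟩) hv (norm_nonneg _) hM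
      have hμ0 : MeasureTheory.volume (Set.Ioc a (t-δ)) ≠ 0 := by
        rw [Real.volume_Ioc]
        simp only [ne_eq, ENNReal.ofReal_eq_zero, not_le]
        linarith
      have hμfin : MeasureTheory.volume (Set.Ioc a (t-δ)) ≠ ⊤ := by
        rw [Real.volume_Ioc]; exact ENNReal.ofReal_ne_top
      have havg : (⨍ s in Set.Ioc a (t-δ), G s ∂MeasureTheory.volume) ∈ S :=
        hSconv.set_average_mem hS.isClosed hμ0 hμfin hmem hIoc
      have hvol : (MeasureTheory.volume (Set.Ioc a (t-δ))).toReal = c := by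
        rw [Real.volume_Ioc, ENNReal.toReal_ofReal (by linarith)]
      have hint_eq : (∫ s in a..(t-δ), G s) =
          c • (⨍ s in Set.Ioc a (t-δ), G s ∂MeasureTheory.volume) := by
        rw [intervalIntegral.integral_of_le hle1, setAverage_eq, measureReal_def, hvol, smul_inv_smul₀ hcpos.ne']
      rw [hint_eq]
      exact ⟨_, havg, rfl⟩
    obtain ⟨z, hzF, hz⟩ := Set.mem_iUnion₂.mp (hFsub hp)
    refine Set.mem_iUnion₂.mpr ⟨z, Set.mem_insert_of_mem _ hzF, ?_⟩
    rw [Metric.mem_ball, hsplit]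
    calc dist ((∫ s in a..(t-δ), G s) + ∫ s in (t-δ)..t, G s) z
        ≤ dist ((∫ s in a..(t-δ), G s) + ∫ s in (t-δ)..t, G s) (∫ s in a..(t-δ), G s)
          + dist (∫ s in a..(t-δ), G s) z := dist_triangle _ _ _
      _ < ε / 2 + ε / 2 := by
          refine add_lt_add_of_le_of_lt ?_ (Metric.mem_ball.mp hz)
          rw [dist_eq_norm, add_sub_cancel_left]
          exact hq
      _ = ε := by ring
  · refine Set.mem_iUnion₂.mpr ⟨0, Set.mem_insert _ _, ?_⟩
    rw [intervalIntegral.integral_undef hInt]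
    simpa using hε

/-- Membership in the space `PC(I, X)` of piecewise-continuous functions on `I = [0, b]`
relative to the partition `0 = t 0 < t 1 < ⋯ < t m < t (m+1) = b`. -/
def IsPC {X : Type*} [NormedAddCommGroup X]
    (b : ℝ) (m : ℕ) (tt : ℕ → ℝ) (x : ℝ → X) : Prop :=
  (∃ C : ℝ, ∀ s ∈ Set.Icc (0:ℝ) b, ‖x s‖ ≤ C) ∧
  (∀ i ≤ m, ContinuousOn x (Set.Ioc (tt i) (tt (i + 1)))) ∧
  (∀ i ≤ m, ∃ L : X, Filter.Tendsto x (nhdsWithin (tt i) (Set.Ioi (tt i))) (nhds L))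

/-- If `T(t)` is a compact operator for every `t > 0` with the semigroup property
`T(t+s) = T(t) T(s)`, then for each fixed `t ∈ (tᵢ, tᵢ₊₁]` the set
`V(t) = {(Q₂x)(t) : x ∈ Ω_r}` is relatively compact in `X`, where
`(Q₂x)(t) = ∫_{tᵢ}^t T(t-s)(f(s, x(s), (Hx)(s)) + w(s)) ds`. -/
theorem Q2_pointwise_relatively_compact
    {X : Type*} [NormedAddCommGroup X] [NormedSpace ℝ X] [CompleteSpace X]
    (b : ℝ) (hb : 0 < b) (m : ℕ) (hm : 1 ≤ m)
    (tt : ℕ → ℝ) (ht0 : tt 0 = 0) (htb : tt (m + 1) = b)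
    (ht_mono : ∀ i j : ℕ, i < j → j ≤ m + 1 → tt i < tt j)
    (r : ℝ) (hr : 0 < r) (M : ℝ)
    (T : ℝ → X →L[ℝ] X)
    (hT : ∀ t ∈ Set.Icc (0:ℝ) b, ‖T t‖ ≤ M)
    (hT_cpt : ∀ t : ℝ, 0 < t → t ≤ b → IsCompactOperator (T t))
    (hT_semigroup : ∀ t s : ℝ, 0 ≤ t → 0 ≤ s → t + s ≤ b →
      T (t + s) = (T t).comp (T s))
    -- the nonlinearity f with growth governed by μ₁, μ₂, μ₃ ∈ L^∞(I, ℝ≥0)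
    (f : ℝ → X → X → X)
    (hf_cont : ContinuousOn (fun p : ℝ × X × X => f p.1 p.2.1 p.2.2)
      (Set.Icc (0:ℝ) b ×ˢ (Set.univ ×ˢ Set.univ)))
    (μ₁ μ₂ μ₃ : ℝ → ℝ) (C₁ C₂ C₃ : ℝ)
    (hμ₁ : ∀ t ∈ Set.Icc (0:ℝ) b, 0 ≤ μ₁ t ∧ μ₁ t ≤ C₁)
    (hμ₂ : ∀ t ∈ Set.Icc (0:ℝ) b, 0 ≤ μ₂ t ∧ μ₂ t ≤ C₂)
    (hμ₃ : ∀ t ∈ Set.Icc (0:ℝ) b, 0 ≤ μ₃ t ∧ μ₃ t ≤ C₃)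
    (hf_growth : ∀ t ∈ Set.Icc (0:ℝ) b, ∀ x y : X,
      ‖f t x y‖ ≤ μ₁ t + μ₂ t * ‖x‖ + μ₃ t * ‖y‖)
    -- the Volterra kernel h dominated by the bounded kernel m
    (h : ℝ → ℝ → X → X)
    (hh_cont : ContinuousOn (fun p : ℝ × ℝ × X => h p.1 p.2.1 p.2.2)
      (Set.Icc (0:ℝ) b ×ˢ (Set.Icc (0:ℝ) b ×ˢ Set.univ)))
    (mker : ℝ → ℝ → ℝ) (Cm : ℝ)
    (hm_nonneg : ∀ t ∈ Set.Icc (0:ℝ) b, ∀ s ∈ Set.Icc (0:ℝ) b, 0 ≤ mker t s)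
    (hm_bdd : ∀ t ∈ Set.Icc (0:ℝ) b, ∀ s ∈ Set.Icc (0:ℝ) b, mker t s ≤ Cm)
    (hh : ∀ t ∈ Set.Icc (0:ℝ) b, ∀ s ∈ Set.Icc (0:ℝ) b, ∀ z : X,
      ‖h t s z‖ ≤ mker t s * ‖z‖)
    (hK : ∀ i, 1 ≤ i → i ≤ m + 1 → ∃ Ki : ℝ, ∀ t ∈ Set.Icc (0:ℝ) b,
      (∫ s in tt (i - 1)..tt i, mker t s) ≤ Ki)
    -- the inhomogeneity w ∈ L^∞(I, X)
    (w : ℝ → X) (Cw : ℝ) (hw : ∀ t ∈ Set.Icc (0:ℝ) b, ‖w t‖ ≤ Cw)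
    (hw_meas : AEStronglyMeasurable w volume)
    -- the operator Q₂ on Ω_r
    (Q₂ : (ℝ → X) → ℝ → X)
    (hQ₂a : ∀ x : ℝ → X, IsPC b m tt x → (∀ s ∈ Set.Icc (0:ℝ) b, ‖x s‖ ≤ r) →
      ∀ t ∈ Set.Icc (0:ℝ) (tt 1),
      Q₂ x t = ∫ s in (0:ℝ)..t,
        T (t - s) (f s (x s) (∫ τ in (0:ℝ)..s, h s τ (x τ)) + w s))
    (hQ₂b : ∀ x : ℝ → X, IsPC b m tt x → (∀ s ∈ Set.Icc (0:ℝ) b, ‖x s‖ ≤ r) →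
      ∀ i, 1 ≤ i → i ≤ m → ∀ t ∈ Set.Ioc (tt i) (tt (i + 1)),
      Q₂ x t = ∫ s in tt i..t,
        T (t - s) (f s (x s) (∫ τ in (0:ℝ)..s, h s τ (x τ)) + w s)) :
    ∀ i ≤ m, ∀ t ∈ Set.Ioc (tt i) (tt (i + 1)),
      IsCompact (closure
        {y : X | ∃ x : ℝ → X, IsPC b m tt x ∧ (∀ s ∈ Set.Icc (0:ℝ) b, ‖x s‖ ≤ r) ∧
          Q₂ x t = y}) := by
  intro i hi t ht
  have h0b : (0:ℝ) ∈ Set.Icc (0:ℝ) b := ⟨le_rfl, hb.le⟩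
  have hC₁ : 0 ≤ C₁ := le_trans (hμ₁ 0 h0b).1 (hμ₁ 0 h0b).2
  have hC₂ : 0 ≤ C₂ := le_trans (hμ₂ 0 h0b).1 (hμ₂ 0 h0b).2
  have hC₃ : 0 ≤ C₃ := le_trans (hμ₃ 0 h0b).1 (hμ₃ 0 h0b).2
  have hCm : 0 ≤ Cm := le_trans (hm_nonneg 0 h0b 0 h0b) (hm_bdd 0 h0b 0 h0b)
  have hCw : 0 ≤ Cw := le_trans (norm_nonneg _) (hw 0 h0b)
  set C : ℝ := C₁ + C₂ * r + C₃ * (Cm * r * b) + Cw with hCdef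
  have hCnn : 0 ≤ C := by positivity
  have ha0 : 0 ≤ tt i := by
    rcases Nat.eq_zero_or_pos i with h0 | hpos
    · rw [h0, ht0]
    · have := ht_mono 0 i hpos (by omega)
      rw [ht0] at this; exact this.le
  have hat : tt i < t := ht.1
  have htle : t ≤ b := by
    have h1 : tt (i+1) ≤ tt (m+1) := by
      rcases eq_or_lt_of_le (Nat.succ_le_succ hi) with he | hl
      · exact le_of_eq (congrArg tt he)
      · exact (ht_mono (i+1) (m+1) hl le_rfl).le
    rw [← htb]; exact le_trans ht.2 h1
  have hTB := key_totallyBounded b (tt i) t ha0 hat htle M C hCnn T hT hT_cpt hT_semigroup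
  apply TotallyBounded.isCompact_of_isClosed _ isClosed_closure
  apply TotallyBounded.closure
  apply hTB.subset
  rintro y ⟨x, hxPC, hxr, rfl⟩
  refine ⟨fun s => T (t - s) (f s (x s) (∫ τ in (0:ℝ)..s, h s τ (x τ)) + w s), ?_, ?_⟩
  · intro s hs
    have hs0b : s ∈ Set.Icc (0:ℝ) b := ⟨le_trans ha0 hs.1.le, le_trans hs.2 htle⟩
    refine ⟨_, ?_, rfl⟩
    have hHx : ‖∫ τ in (0:ℝ)..s, h s τ (x τ)‖ ≤ Cm * r * b := by
      have hbd : ∀ τ ∈ Set.uIoc (0:ℝ) s, ‖h s τ (x τ)‖ ≤ Cm * r := by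
        intro τ hτ
        rw [Set.uIoc_of_le hs0b.1] at hτ
        have hτb : τ ∈ Set.Icc (0:ℝ) b := ⟨hτ.1.le, le_trans hτ.2 hs0b.2⟩
        calc ‖h s τ (x τ)‖ ≤ mker s τ * ‖x τ‖ := hh s hs0b τ hτb _
          _ ≤ Cm * r := mul_le_mul (hm_bdd s hs0b τ hτb) (hxr τ hτb) (norm_nonneg _) hCm
      have := intervalIntegral.norm_integral_le_of_norm_le_const hbd
      have habs : |s - 0| = s := by rw [abs_of_nonneg (by linarith [hs0b.1])]; ring
      rw [habs] at this
      calc ‖∫ τ in (0:ℝ)..s, h s τ (x τ)‖ ≤ Cm * r * s := this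
        _ ≤ Cm * r * b := by nlinarith [hs0b.2, mul_nonneg hCm hr.le]
    calc ‖f s (x s) (∫ τ in (0:ℝ)..s, h s τ (x τ)) + w s‖
        ≤ ‖f s (x s) (∫ τ in (0:ℝ)..s, h s τ (x τ))‖ + ‖w s‖ := norm_add_le _ _
      _ ≤ (μ₁ s + μ₂ s * ‖x s‖ + μ₃ s * ‖∫ τ in (0:ℝ)..s, h s τ (x τ)‖) + Cw :=
          add_le_add (hf_growth s hs0b _ _) (hw s hs0b)
      _ ≤ (C₁ + C₂ * r + C₃ * (Cm * r * b)) + Cw := by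
          refine add_le_add (add_le_add (add_le_add (hμ₁ s hs0b).2 ?_) ?_) le_rfl
          · exact mul_le_mul (hμ₂ s hs0b).2 (hxr s hs0b) (norm_nonneg _) hC₂
          · exact mul_le_mul (hμ₃ s hs0b).2 hHx (norm_nonneg _) hC₃
      _ = C := by rw [hCdef]
  · rcases Nat.eq_zero_or_pos i with h0 | hpos
    · subst h0
      rw [ht0]
      exact hQ₂a x hxPC hxr t ⟨le_of_lt (by rw [← ht0]; exact ht.1), ht.2⟩
    · exact hQ₂b x hxPC hxr i hpos hi t ht
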